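/- Let S be a slice of an LBFS of a graph G with maximal subslices x, S_1, ..., S_k in order. For every pair of indices i, j with 1 < i < j, there exists a vertex y lying in some S_ℓ with ℓ < i such that y is adjacent to every vertex of S_i and to no vertex of S_j. -/

import Mathlib

/-- The LBFS label of vertex `v` just before step `t`: for each earlier step `i < t`
(in increasing order of `i`) at which a neighbour of `v` was explored, the value `n - i`
is appended. -/
def lbfsLabel {V : Type*} (G : SimpleGraph V) [DecidableRel G.Adj] (σ : ℕ → V)
    (n t : ℕ) (v : V) : List ℕ :=
  ((List.range t).filter (fun i => decide (G.Adj (σ i) v))).map (fun i => n - i)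

/-- `σ` (restricted to `[0,n)`) is a Lexicographic Breadth-First Search ordering of `G`:
it enumerates all vertices, and at each step the chosen vertex has lexicographically
largest label among the unexplored vertices. -/
def IsLBFS {V : Type*} (G : SimpleGraph V) [DecidableRel G.Adj] (n : ℕ) (σ : ℕ → V) : Prop :=
  Set.BijOn σ (Set.Iio n) Set.univ ∧
    ∀ t < n, ∀ v : V, (∀ i < t, σ i ≠ v) →
      ¬ List.Lex (· < ·) (lbfsLabel G σ n t (σ t)) (lbfsLabel G σ n t v)

/-- The slice defined at step `t`: the unexplored vertices sharing the (lexicographically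
largest) label of the chosen vertex `σ t` just before step `t`. -/
def sliceAt {V : Type*} (G : SimpleGraph V) [DecidableRel G.Adj] (σ : ℕ → V) (n t : ℕ) :
    Set V :=
  {v | (∀ i < t, σ i ≠ v) ∧ lbfsLabel G σ n t v = lbfsLabel G σ n t (σ t)}

/-- `S` is a slice of the LBFS. -/
def IsSlice {V : Type*} (G : SimpleGraph V) [DecidableRel G.Adj] (σ : ℕ → V) (n : ℕ)
    (S : Set V) : Prop :=
  ∃ t < n, S = sliceAt G σ n t

/-- The slice defined at step `u` is a maximal (proper) subslice of the slice at step `t`. -/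
def IsMaxSubsliceAt {V : Type*} (G : SimpleGraph V) [DecidableRel G.Adj] (σ : ℕ → V)
    (n t u : ℕ) : Prop :=
  u < n ∧ sliceAt G σ n u ⊂ sliceAt G σ n t ∧
    ∀ w < n, ¬(sliceAt G σ n u ⊂ sliceAt G σ n w ∧ sliceAt G σ n w ⊂ sliceAt G σ n t)

/-- `u 1, …, u k` are the steps defining the maximal subslices `S_1, …, S_k` of the slice
at step `t`, listed in the order the LBFS defines them (the initial vertex `σ t`, as a
singleton, being by convention the zeroth maximal subslice). -/
def MaxSubsliceEnum {V : Type*} (G : SimpleGraph V) [DecidableRel G.Adj] (σ : ℕ → V)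
    (n t k : ℕ) (u : ℕ → ℕ) : Prop :=
  (∀ i, 1 ≤ i → i ≤ k → IsMaxSubsliceAt G σ n t (u i)) ∧
  (∀ i j, 1 ≤ i → i < j → j ≤ k → u i < u j) ∧
  (∀ i, 1 ≤ i → i ≤ k → t < u i) ∧
  (∀ w, w < n → IsMaxSubsliceAt G σ n t w →
    ∃ i, 1 ≤ i ∧ i ≤ k ∧ sliceAt G σ n w = sliceAt G σ n (u i))

/-- The edge `ab` is active for the slice at step `t`: both endpoints lie in that slice
but in different maximal subslices of it (i.e. no maximal subslice contains both). -/
def activeFor {V : Type*} (G : SimpleGraph V) [DecidableRel G.Adj] (σ : ℕ → V)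
    (n t : ℕ) (a b : V) : Prop :=
  G.Adj a b ∧ a ∈ sliceAt G σ n t ∧ b ∈ sliceAt G σ n t ∧
    ∀ w, IsMaxSubsliceAt G σ n t w → ¬(a ∈ sliceAt G σ n w ∧ b ∈ sliceAt G σ n w)

section AuxLemmas

lemma lex_cons_self_iff (a : ℕ) (l1 l2 : List ℕ) :
    List.Lex (· < ·) (a::l1) (a::l2) ↔ List.Lex (· < ·) l1 l2 := by
  constructor
  · intro h
    cases h with
    | rel h => omega
    | cons h => exact h
  · exact List.Lex.cons

lemma lex_irrefl' (l : List ℕ) : ¬ List.Lex (· < ·) l l := by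
  induction l with
  | nil => intro h; cases h
  | cons a l ih => rw [lex_cons_self_iff]; exact ih

lemma not_lex_cons_of_forall_lt (a : ℕ) (l1 l2 : List ℕ) (h : ∀ x ∈ l2, x < a) :
    ¬ List.Lex (· < ·) (a::l1) l2 := by
  intro hlex
  cases l2 with
  | nil => cases hlex
  | cons b l2' =>
    have hb := h b List.mem_cons_self
    cases hlex with
    | rel hr => omega
    | cons hc => omega

lemma lex_filter_map_iff :
    ∀ (s : ℕ) (f : ℕ → ℕ), (∀ i j : ℕ, i < j → j < s → f j < f i) →
    ∀ (P Q : ℕ → Bool),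
    (List.Lex (· < ·) (((List.range s).filter P).map f)
        (((List.range s).filter Q).map f) ↔
      ∃ m, m < s ∧ P m = false ∧ Q m = true ∧ ∀ i < m, P i = Q i) := by
  intro s
  induction s with
  | zero =>
    intro f hf P Q
    simp only [List.range_zero, List.filter_nil, List.map_nil]
    constructor
    · intro h; cases h
    · rintro ⟨m, hm, _⟩; omega
  | succ s ih =>
    intro f hf P Q
    have hf' : ∀ i j : ℕ, i < j → j < s → f (j+1) < f (i+1) := by
      intro i j h1 h2; exact hf (i+1) (j+1) (by omega) (by omega)
    have key := ih (fun i => f (i+1)) hf' (fun i => P (i+1)) (fun i => Q (i+1))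
    have expand : ∀ (R : ℕ → Bool),
        ((List.range (s+1)).filter R).map f =
          (if R 0 then [f 0] else []) ++
            ((List.range s).filter (fun i => R (i+1))).map (fun i => f (i+1)) := by
      intro R
      rw [List.range_succ_eq_map, List.filter_cons, List.filter_map]
      by_cases h : R 0 <;> simp [h, Function.comp_def]
    rw [expand P, expand Q]
    have hmemlt : ∀ (R : ℕ → Bool) (x : ℕ),
        x ∈ ((List.range s).filter (fun i => R (i+1))).map (fun i => f (i+1)) → x < f 0 := by
      intro R x hx
      simp only [List.mem_map, List.mem_filter, List.mem_range] at hx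
      obtain ⟨i, ⟨hi, _⟩, rfl⟩ := hx
      exact hf 0 (i+1) (by omega) (by omega)
    by_cases hP : P 0 <;> by_cases hQ : Q 0 <;>
      simp only [hP, hQ, if_pos, if_neg, Bool.not_eq_true, if_true, if_false,
        List.nil_append, List.singleton_append]
    · -- both true
      rw [lex_cons_self_iff, key]
      constructor
      · rintro ⟨m, hm, h1, h2, h3⟩
        refine ⟨m+1, by omega, h1, h2, ?_⟩
        intro i hi
        match i with
        | 0 => rw [hP, hQ]
        | (i'+1) => exact h3 i' (by omega)
      · rintro ⟨m, hm, h1, h2, h3⟩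
        match m with
        | 0 => rw [hP] at h1; exact absurd h1 (by simp)
        | (m'+1) => exact ⟨m', by omega, h1, h2, fun i hi => h3 (i+1) (by omega)⟩
    · -- P true Q false : LHS false, RHS false
      have hQ' : Q 0 = false := by simpa using hQ
      constructor
      · intro h
        exact absurd h (not_lex_cons_of_forall_lt _ _ _ (hmemlt Q))
      · rintro ⟨m, hm, h1, h2, h3⟩
        match m with
        | 0 => rw [hP] at h1; exact absurd h1 (by simp)
        | (m'+1) =>
          have := h3 0 (by omega); rw [hP, hQ'] at this
          exact absurd this (by simp)
    · -- P false Q true: both sides true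
      have hP' : P 0 = false := by simpa using hP
      constructor
      · intro _; exact ⟨0, by omega, hP', hQ, by omega⟩
      · intro _
        cases hL : ((List.range s).filter (fun i => P (i+1))).map (fun i => f (i+1)) with
        | nil => exact List.Lex.nil
        | cons a l =>
          apply List.Lex.rel
          apply hmemlt P a
          rw [hL]; exact List.mem_cons_self
    · -- both false
      have hP' : P 0 = false := by simpa using hP
      have hQ' : Q 0 = false := by simpa using hQ
      rw [key]
      constructor
      · rintro ⟨m, hm, h1, h2, h3⟩
        refine ⟨m+1, by omega, h1, h2, ?_⟩
        intro i hi
        match i with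
        | 0 => rw [hP', hQ']
        | (i'+1) => exact h3 i' (by omega)
      · rintro ⟨m, hm, h1, h2, h3⟩
        match m with
        | 0 => rw [hQ'] at h2; exact absurd h2 (by simp)
        | (m'+1) => exact ⟨m', by omega, h1, h2, fun i hi => h3 (i+1) (by omega)⟩

variable {V : Type*} (G : SimpleGraph V) [DecidableRel G.Adj] (σ : ℕ → V) (n : ℕ)

lemma label_lex_iff {s : ℕ} (hs : s ≤ n) (v w : V) :
    List.Lex (· < ·) (lbfsLabel G σ n s v) (lbfsLabel G σ n s w) ↔
      ∃ m, m < s ∧ ¬G.Adj (σ m) v ∧ G.Adj (σ m) w ∧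
        ∀ i < m, (G.Adj (σ i) v ↔ G.Adj (σ i) w) := by
  unfold lbfsLabel
  rw [lex_filter_map_iff s (fun i => n - i) (by intro i j h1 h2; show n - j < n - i; omega)]
  constructor
  · rintro ⟨m, h1, h2, h3, h4⟩
    refine ⟨m, h1, by simpa using h2, by simpa using h3, fun i hi => ?_⟩
    have := h4 i hi
    constructor <;> intro h <;> simp_all
  · rintro ⟨m, h1, h2, h3, h4⟩
    refine ⟨m, h1, by simpa using h2, by simpa using h3, fun i hi => ?_⟩
    have := h4 i hi
    by_cases h : G.Adj (σ i) v <;> simp_all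

lemma label_eq_iff {s : ℕ} (hs : s ≤ n) (v w : V) :
    lbfsLabel G σ n s v = lbfsLabel G σ n s w ↔
      ∀ i < s, (G.Adj (σ i) v ↔ G.Adj (σ i) w) := by
  constructor
  · intro h
    by_contra hcon
    push_neg at hcon
    obtain ⟨m0, hm0, hne⟩ := hcon
    classical
    have hex : ∃ m, m < s ∧ ¬(G.Adj (σ m) v ↔ G.Adj (σ m) w) := ⟨m0, hm0, by tauto⟩
    obtain ⟨m, hms, hmne, hmin⟩ : ∃ m, m < s ∧ ¬(G.Adj (σ m) v ↔ G.Adj (σ m) w) ∧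
        ∀ i < m, (G.Adj (σ i) v ↔ G.Adj (σ i) w) := by
      have hwf := Nat.find_spec hex
      refine ⟨Nat.find hex, hwf.1, hwf.2, fun i hi => ?_⟩
      by_contra hbad
      exact absurd (Nat.find_min hex hi ⟨hi.trans hwf.1, hbad⟩) (by simp)
    by_cases hv : G.Adj (σ m) v
    · have hw : ¬ G.Adj (σ m) w := fun hw => hmne ⟨fun _ => hw, fun _ => hv⟩
      have : List.Lex (· < ·) (lbfsLabel G σ n s w) (lbfsLabel G σ n s v) :=
        (label_lex_iff G σ n hs w v).2 ⟨m, hms, hw, hv, fun i hi => (hmin i hi).symm⟩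
      rw [h] at this
      exact lex_irrefl' _ this
    · have hw : G.Adj (σ m) w := by
        by_contra hw
        exact hmne ⟨fun h' => absurd h' hv, fun h' => absurd h' hw⟩
      have : List.Lex (· < ·) (lbfsLabel G σ n s v) (lbfsLabel G σ n s w) :=
        (label_lex_iff G σ n hs v w).2 ⟨m, hms, hv, hw, hmin⟩
      rw [h] at this
      exact lex_irrefl' _ this
  · intro h
    unfold lbfsLabel
    congr 1
    apply List.filter_congr
    intro i hi
    simp only [List.mem_range] at hi
    simp only [decide_eq_decide]
    exact h i hi

lemma mem_sliceAt_iff {s : ℕ} (hs : s ≤ n) (v : V) :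
    v ∈ sliceAt G σ n s ↔ (∀ i < s, σ i ≠ v) ∧
      ∀ i < s, (G.Adj (σ i) v ↔ G.Adj (σ i) (σ s)) := by
  unfold sliceAt
  rw [Set.mem_setOf_eq, label_eq_iff G σ n hs]

lemma sigma_ne (hL : IsLBFS G n σ) {a b : ℕ} (ha : a < n) (hb : b < n) (hab : a ≠ b) :
    σ a ≠ σ b := fun h => hab (hL.1.2.1 ha hb h)

lemma self_mem_sliceAt (hL : IsLBFS G n σ) {s : ℕ} (hs : s < n) :
    σ s ∈ sliceAt G σ n s := by
  rw [mem_sliceAt_iff G σ n hs.le]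
  exact ⟨fun i hi => sigma_ne G σ n hL (hi.trans hs) hs (by omega), fun i hi => Iff.rfl⟩

lemma explored_not_mem {s i : ℕ} (his : i < s) : σ i ∉ sliceAt G σ n s := by
  intro h
  exact h.1 i his rfl

/-- any first disagreement with an unexplored vertex favours the chosen vertex -/
lemma chosen_pref (hL : IsLBFS G n σ) {s : ℕ} (hs : s < n) {w : V}
    (hw : ∀ i < s, σ i ≠ w) {m : ℕ} (hm : m < s)
    (hagree : ∀ i < m, (G.Adj (σ i) (σ s) ↔ G.Adj (σ i) w))
    (hadj : G.Adj (σ m) w) : G.Adj (σ m) (σ s) := by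
  by_contra h
  exact hL.2 s hs w hw ((label_lex_iff G σ n hs.le _ _).2 ⟨m, hm, h, hadj, hagree⟩)

/-- the chosen vertex at step `s` belongs to any earlier slice having an
unexplored member at step `s`. -/
lemma sigma_mem_slice (hL : IsLBFS G n σ) {t s : ℕ} (hts : t < s) (hs : s < n) {w : V}
    (hwslice : w ∈ sliceAt G σ n t) (hw : ∀ i < s, σ i ≠ w) :
    σ s ∈ sliceAt G σ n t := by
  have ht : t < n := hts.trans hs
  have hwt := (mem_sliceAt_iff G σ n ht.le w).1 hwslice
  rw [mem_sliceAt_iff G σ n ht.le]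
  refine ⟨fun i hi => sigma_ne G σ n hL (hi.trans ht) hs (by omega), ?_⟩
  intro i hit
  induction i using Nat.strong_induction_on with
  | _ i ihyp =>
    have hagree : ∀ i' < i, (G.Adj (σ i') (σ s) ↔ G.Adj (σ i') (σ t)) :=
      fun i' hi' => ihyp i' hi' (by omega)
    constructor
    · intro h
      exact chosen_pref G σ n hL ht
        (fun i' hi' => sigma_ne G σ n hL (hi'.trans ht) hs (by omega))
        hit (fun i' hi' => (hagree i' hi').symm) h
    · intro h
      have haw : G.Adj (σ i) w := (hwt.2 i hit).2 h
      exact chosen_pref G σ n hL hs hw (hit.trans hts)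
        (fun i' hi' => (hagree i' hi').trans (hwt.2 i' (by omega)).symm) haw

/-- laminarity: a later slice meeting an earlier one is contained in it. -/
lemma slice_nested {p q : ℕ} (hpq : p ≤ q) (hq : q ≤ n) {x0 : V}
    (h1 : x0 ∈ sliceAt G σ n p) (h2 : x0 ∈ sliceAt G σ n q) :
    sliceAt G σ n q ⊆ sliceAt G σ n p := by
  have hp : p ≤ n := hpq.trans hq
  intro v hv
  rw [mem_sliceAt_iff G σ n hq] at hv h2
  rw [mem_sliceAt_iff G σ n hp] at h1 ⊢
  refine ⟨fun i hi => hv.1 i (by omega), fun i hi => ?_⟩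
  calc G.Adj (σ i) v ↔ G.Adj (σ i) (σ q) := hv.2 i (by omega)
    _ ↔ G.Adj (σ i) x0 := (h2.2 i (by omega)).symm
    _ ↔ G.Adj (σ i) (σ p) := h1.2 i hi

end AuxLemmas

/-- for maximal subslices `S_i, S_j` with `1 < i < j`, some vertex of an
earlier maximal subslice `S_ℓ` (ℓ < i) is universal to `S_i` and isolated from `S_j`. -/
theorem earlier_distinguishing_vertex {V : Type*} (G : SimpleGraph V) [DecidableRel G.Adj]
    (n : ℕ) (σ : ℕ → V) (hL : IsLBFS G n σ) (t : ℕ) (ht : t < n)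
    (k : ℕ) (u : ℕ → ℕ) (hu : MaxSubsliceEnum G σ n t k u) :
    ∀ i j, 1 < i → i < j → j ≤ k →
      ∃ ℓ, 1 ≤ ℓ ∧ ℓ < i ∧ ∃ y ∈ sliceAt G σ n (u ℓ),
        (∀ z ∈ sliceAt G σ n (u i), G.Adj y z) ∧
        (∀ z ∈ sliceAt G σ n (u j), ¬ G.Adj y z) := by
  classical
  obtain ⟨hu1, hu2, hu3, hu4⟩ := hu
  intro i j h1i hij hjk
  obtain ⟨hpn, hpsub, hpmaximal⟩ := hu1 i (by omega) (by omega)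
  obtain ⟨hqn, hqsub, hqmaximal⟩ := hu1 j (by omega) hjk
  have hpq : u i < u j := hu2 i j (by omega) hij hjk
  have htp : t < u i := hu3 i (by omega) (by omega)
  have htq : t < u j := htp.trans hpq
  have hw0p : σ (u i) ∈ sliceAt G σ n (u i) := self_mem_sliceAt G σ n hL hpn
  have hw0t : σ (u i) ∈ sliceAt G σ n t := hpsub.1 hw0p
  have hz0q : σ (u j) ∈ sliceAt G σ n (u j) := self_mem_sliceAt G σ n hL hqn
  have hz0t : σ (u j) ∈ sliceAt G σ n t := hqsub.1 hz0q
  have hw0t' := (mem_sliceAt_iff G σ n ht.le _).1 hw0t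
  have hz0t' := (mem_sliceAt_iff G σ n ht.le _).1 hz0t
  have hz0unexp : ∀ i' < u i, σ i' ≠ σ (u j) :=
    fun i' hi' => sigma_ne G σ n hL (by omega) hqn (by omega)
  -- the traces of σ (u j) and σ (u i) must disagree somewhere below u i
  have hne : ¬ (∀ i' < u i, (G.Adj (σ i') (σ (u j)) ↔ G.Adj (σ i') (σ (u i)))) := by
    intro hagree
    have hz0p : σ (u j) ∈ sliceAt G σ n (u i) :=
      (mem_sliceAt_iff G σ n hpn.le _).2 ⟨hz0unexp, hagree⟩
    have hsub : sliceAt G σ n (u j) ⊆ sliceAt G σ n (u i) :=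
      slice_nested G σ n hpq.le hqn.le hz0p hz0q
    have hss : sliceAt G σ n (u j) ⊂ sliceAt G σ n (u i) :=
      ⟨hsub, fun hsup => explored_not_mem G σ n hpq (hsup hw0p)⟩
    exact hqmaximal (u i) hpn ⟨hss, hpsub⟩
  -- take the least point of disagreement
  have hex : ∃ m, m < u i ∧ ¬(G.Adj (σ m) (σ (u j)) ↔ G.Adj (σ m) (σ (u i))) := by
    by_contra hc
    push_neg at hc
    exact hne hc
  obtain ⟨m, hm, hdis, hmin⟩ : ∃ m, m < u i ∧
      ¬(G.Adj (σ m) (σ (u j)) ↔ G.Adj (σ m) (σ (u i))) ∧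
      ∀ i' < m, (G.Adj (σ i') (σ (u j)) ↔ G.Adj (σ i') (σ (u i))) := by
    have hwf := Nat.find_spec hex
    refine ⟨Nat.find hex, hwf.1, hwf.2, fun i' hi' => ?_⟩
    by_contra hbad
    exact absurd (Nat.find_min hex hi' ⟨hi'.trans hwf.1, hbad⟩) (by simp)
  have hdir : G.Adj (σ m) (σ (u i)) ∧ ¬ G.Adj (σ m) (σ (u j)) := by
    by_cases hz : G.Adj (σ m) (σ (u j))
    · have := chosen_pref G σ n hL hpn hz0unexp hm
        (fun i' hi' => (hmin i' hi').symm) hz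
      exact absurd ⟨fun _ => this, fun _ => hz⟩ hdis
    · by_cases hw : G.Adj (σ m) (σ (u i))
      · exact ⟨hw, hz⟩
      · exact absurd ⟨fun h => absurd h hz, fun h' => absurd h' hw⟩ hdis
  have hmge : t ≤ m := by
    by_contra hlt
    push_neg at hlt
    exact hdis ((hz0t'.2 m hlt).trans (hw0t'.2 m hlt).symm)
  -- the disagreement cannot be at time t itself
  have hmt : m ≠ t := by
    intro hmeq
    subst hmeq
    have ht1p : m + 1 ≤ u i := htp
    have ht1n : m + 1 < n := by omega
    have key : σ (m+1) ∈ sliceAt G σ n m ∧ G.Adj (σ m) (σ (m+1)) := by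
      rcases eq_or_lt_of_le ht1p with heq | hlt
      · exact ⟨by rw [← heq] at hw0t; exact hw0t, by rw [← heq] at hdir; exact hdir.1⟩
      · have hw0un : ∀ i' < m+1, σ i' ≠ σ (u i) :=
          fun i' hi' => sigma_ne G σ n hL (by omega) hpn (by omega)
        have h1 : σ (m+1) ∈ sliceAt G σ n m :=
          sigma_mem_slice G σ n hL (by omega) ht1n hw0t hw0un
        have h1' := (mem_sliceAt_iff G σ n ht.le _).1 h1
        have h2 : G.Adj (σ m) (σ (m+1)) := chosen_pref G σ n hL ht1n hw0un (by omega)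
          (fun i' hi' => (h1'.2 i' hi').trans (hw0t'.2 i' hi').symm) hdir.1
        exact ⟨h1, h2⟩
    have key' := (mem_sliceAt_iff G σ n ht.le _).1 key.1
    have hsub1 : sliceAt G σ n (m+1) ⊆ sliceAt G σ n m := by
      intro v hv
      have hv' := (mem_sliceAt_iff G σ n ht1n.le v).1 hv
      rw [mem_sliceAt_iff G σ n ht.le]
      exact ⟨fun i' hi' => hv'.1 i' (by omega),
        fun i' hi' => (hv'.2 i' (by omega)).trans (key'.2 i' hi')⟩
    have hss1 : sliceAt G σ n (m+1) ⊂ sliceAt G σ n m :=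
      ⟨hsub1, fun hsup =>
        explored_not_mem G σ n (by omega) (hsup (self_mem_sliceAt G σ n hL ht))⟩
    have hw01 : σ (u i) ∈ sliceAt G σ n (m+1) := by
      rcases eq_or_lt_of_le ht1p with heq | hlt
      · rw [← heq]; exact self_mem_sliceAt G σ n hL ht1n
      · rw [mem_sliceAt_iff G σ n ht1n.le]
        refine ⟨fun i' hi' => sigma_ne G σ n hL (by omega) hpn (by omega), ?_⟩
        intro i' hi'
        rcases Nat.lt_succ_iff_lt_or_eq.1 hi' with h | rfl
        · exact (hw0t'.2 i' h).trans (key'.2 i' h).symm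
        · exact iff_of_true hdir.1 key.2
    have heqslice : sliceAt G σ n (u i) = sliceAt G σ n (m+1) := by
      have hsubp : sliceAt G σ n (u i) ⊆ sliceAt G σ n (m+1) :=
        slice_nested G σ n ht1p hpn.le hw01 hw0p
      by_contra hnc
      exact hpmaximal (m+1) ht1n
        ⟨⟨hsubp, fun hsup => hnc (Set.Subset.antisymm hsubp hsup)⟩, hss1⟩
    obtain ⟨hs1n, hs1sub, _⟩ := hu1 1 le_rfl (by omega)
    have hts1 : m < u 1 := hu3 1 le_rfl (by omega)
    have hs1p : u 1 < u i := hu2 1 i le_rfl (by omega) (by omega)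
    have hs1mem : σ (u 1) ∈ sliceAt G σ n (m+1) := by
      rcases eq_or_lt_of_le (show m+1 ≤ u 1 by omega) with heq | hlt
      · rw [← heq]; exact self_mem_sliceAt G σ n hL ht1n
      · rw [mem_sliceAt_iff G σ n ht1n.le]
        have hs1t : σ (u 1) ∈ sliceAt G σ n m :=
          hs1sub.1 (self_mem_sliceAt G σ n hL hs1n)
        have hs1t' := (mem_sliceAt_iff G σ n ht.le _).1 hs1t
        have hadjt : G.Adj (σ m) (σ (u 1)) := by
          have hw0un : ∀ i' < u 1, σ i' ≠ σ (u i) :=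
            fun i' hi' => sigma_ne G σ n hL (by omega) hpn (by omega)
          exact chosen_pref G σ n hL hs1n hw0un hts1
            (fun i' hi' => (hs1t'.2 i' hi').trans (hw0t'.2 i' hi').symm) hdir.1
        refine ⟨fun i' hi' => sigma_ne G σ n hL (by omega) hs1n (by omega), ?_⟩
        intro i' hi'
        rcases Nat.lt_succ_iff_lt_or_eq.1 hi' with h | rfl
        · exact (hs1t'.2 i' h).trans (key'.2 i' h).symm
        · exact iff_of_true hadjt key.2
    rw [← heqslice] at hs1mem
    exact explored_not_mem G σ n hs1p hs1mem
  have htm : t < m := by omega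
  have hmn : m < n := by omega
  have hymt : σ m ∈ sliceAt G σ n t := sigma_mem_slice G σ n hL htm hmn hw0t
    (fun i' hi' => sigma_ne G σ n hL (by omega) hpn (by omega))
  have hymt' := (mem_sliceAt_iff G σ n ht.le _).1 hymt
  have hsubm : sliceAt G σ n m ⊂ sliceAt G σ n t := by
    constructor
    · intro v hv
      have hv' := (mem_sliceAt_iff G σ n hmn.le v).1 hv
      rw [mem_sliceAt_iff G σ n ht.le]
      exact ⟨fun i' hi' => hv'.1 i' (by omega),
        fun i' hi' => (hv'.2 i' (by omega)).trans (hymt'.2 i' hi')⟩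
    · intro hsup
      exact explored_not_mem G σ n htm (hsup (self_mem_sliceAt G σ n hL ht))
  -- least step whose slice contains σ m and sits strictly inside slice t
  have hexr : ∃ r, σ m ∈ sliceAt G σ n r ∧ sliceAt G σ n r ⊂ sliceAt G σ n t :=
    ⟨m, self_mem_sliceAt G σ n hL hmn, hsubm⟩
  set r := Nat.find hexr with hr_def
  obtain ⟨hrmem, hrsub⟩ := Nat.find_spec hexr
  have hrm : r ≤ m := Nat.find_min' hexr ⟨self_mem_sliceAt G σ n hL hmn, hsubm⟩
  have hrn : r < n := by omega
  have hrmax : IsMaxSubsliceAt G σ n t r := by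
    refine ⟨hrn, hrsub, ?_⟩
    intro w hwn hcon
    have hmem_w : σ m ∈ sliceAt G σ n w := hcon.1.1 hrmem
    have hwr : w < r := by
      by_contra hge
      push_neg at hge
      exact hcon.1.2 (slice_nested G σ n hge hwn.le hrmem hmem_w)
    exact Nat.find_min hexr hwr ⟨hmem_w, hcon.2⟩
  obtain ⟨ℓ, hℓ1, hℓk, heqℓ⟩ := hu4 r hrn hrmax
  have hmemℓ : σ m ∈ sliceAt G σ n (u ℓ) := heqℓ ▸ hrmem
  have hℓi : ℓ < i := by
    by_contra hge
    push_neg at hge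
    have hple : u i ≤ u ℓ := by
      rcases eq_or_lt_of_le hge with heq | hlt
      · rw [heq]
      · exact (hu2 i ℓ (by omega) hlt hℓk).le
    exact hmemℓ.1 m (by omega) rfl
  refine ⟨ℓ, hℓ1, hℓi, σ m, hmemℓ, ?_, ?_⟩
  · intro z hz
    have hz' := (mem_sliceAt_iff G σ n hpn.le z).1 hz
    exact (hz'.2 m hm).2 hdir.1
  · intro z hz hadj
    have hz' := (mem_sliceAt_iff G σ n hqn.le z).1 hz
    exact hdir.2 ((hz'.2 m (by omega)).1 hadj)
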